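/- Let f : ℝⁿ → ℝ, g : ℝⁿ → ℝⁿ, ρ, τ > 0, f̄ ∈ ℝ, L ≥ 0, δ ∈ [0, 1/2], and N ∈ ℕ. Let {T^k}_{k<N} be independent Bernoulli random variables with ℙ(T^k = 1) ≥ 1 − δ, and let {X^k}_{k ≤ N} be a random sequence in ℝⁿ such that almost surely, for every k < N: f(X^k) − f(X^{k+1}) ≥ T^k · ρ · ‖X^{k+1} − X^k‖² and ‖X^{k+1} − X^k‖ ≥ T^k · τ · ‖g(X^k)‖; assume f ≥ f̄ everywhere, X⁰ = x⁰ is deterministic, and almost surely at most L of the indices k < N satisfy both T^k = 1 and X^{k+1} = X^k. Then for any γ ∈ (0, 1) with (1 − γ)(1 − δ)N − L > 0, ℙ( min_{n ≤ N} ‖g(X^n)‖ ≥ √( (f(x⁰) − f̄) / (ρ·τ²·((1 − γ)(1 − δ)N − L)) ) ) ≤ e^{−N(1 − δ)γ²/2}. -/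

import Mathlib

open scoped Classical

open MeasureTheory ProbabilityTheory


lemma exp_neg_le_quad {x : ℝ} (hx : 0 ≤ x) : Real.exp (-x) ≤ 1 - x + x ^ 2 / 2 := by
  have hmono : MonotoneOn (fun z : ℝ => 1 - z + z ^ 2 / 2 - Real.exp (-z)) (Set.Ici 0) := by
    have hF : ∀ y : ℝ, HasDerivAt (fun z : ℝ => 1 - z + z ^ 2 / 2 - Real.exp (-z))
        (-1 + y - Real.exp (-y) * (-1)) y := by
      intro y
      have h1 : HasDerivAt (fun z : ℝ => Real.exp (-z)) (Real.exp (-y) * (-1)) y :=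
        ((hasDerivAt_id y).neg).exp
      have hq : HasDerivAt (fun z : ℝ => z ^ 2 / 2) y y := by
        simpa using (hasDerivAt_pow 2 y).div_const 2
      have hlin : HasDerivAt (fun z : ℝ => 1 - z) (-1) y := (hasDerivAt_id y).const_sub 1
      exact (hlin.add hq).sub h1
    apply monotoneOn_of_deriv_nonneg (convex_Ici 0)
    · exact Continuous.continuousOn (by continuity)
    · intro y _; exact (hF y).differentiableAt.differentiableWithinAt
    · intro y hy
      rw [(hF y).deriv]
      have := Real.add_one_le_exp (-y)
      nlinarith [Real.exp_pos (-y)]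
  have h0 : (fun z : ℝ => 1 - z + z ^ 2 / 2 - Real.exp (-z)) 0 ≤
      (fun z : ℝ => 1 - z + z ^ 2 / 2 - Real.exp (-z)) x :=
    hmono (Set.self_mem_Ici) hx hx
  norm_num at h0
  nlinarith [h0]

lemma bern_chernoff {Ω : Type*} [MeasurableSpace Ω] (μ : Measure Ω) [IsProbabilityMeasure μ]
    (N : ℕ) (T : ℕ → Ω → ℝ) (hTmeas : ∀ k, Measurable (T k))
    (hBer : ∀ k ω, T k ω ∈ ({0, 1} : Set ℝ))
    (hindep : iIndepFun (fun k : Fin N => T k) μ)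
    (δ : ℝ) (hδ1 : δ ≤ 1 / 2)
    (hp : ∀ k < N, (μ {ω | T k ω = 1}).toReal ≥ 1 - δ)
    (γ : ℝ) (hγ : γ ∈ Set.Ioo (0 : ℝ) 1) :
    (μ {ω | ∑ k ∈ Finset.range N, T k ω ≤ (1 - γ) * (1 - δ) * (N : ℝ)}).toReal
      ≤ Real.exp (-(N : ℝ) * (1 - δ) * γ ^ 2 / 2) := by
  obtain ⟨hγ0, hγ1⟩ := hγ
  set S : Ω → ℝ := fun ω => ∑ k ∈ Finset.range N, T k ω with hSdef
  have hBer' : ∀ k ω, T k ω = 0 ∨ T k ω = 1 := fun k ω => by simpa using hBer k ω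
  have hT01 : ∀ k ω, 0 ≤ T k ω ∧ T k ω ≤ 1 := by
    intro k ω; rcases hBer' k ω with h | h <;> simp [h]
  -- integrability of exp(-γ * T k)
  have hintT : ∀ k, Integrable (fun ω => Real.exp (-γ * T k ω)) μ := by
    intro k
    refine (integrable_const (1 : ℝ)).mono'
      (((hTmeas k).const_mul (-γ)).exp.aestronglyMeasurable) ?_
    filter_upwards with ω
    rw [Real.norm_eq_abs, abs_of_pos (Real.exp_pos _)]
    rw [show (1:ℝ) = Real.exp 0 by simp]
    apply Real.exp_le_exp.2
    nlinarith [(hT01 k ω).1]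
  have hintS : Integrable (fun ω => Real.exp (-γ * S ω)) μ := by
    refine (integrable_const (1 : ℝ)).mono'
      ((Finset.measurable_sum _ (fun k _ => hTmeas k)).const_mul (-γ)).exp.aestronglyMeasurable ?_
    filter_upwards with ω
    rw [Real.norm_eq_abs, abs_of_pos (Real.exp_pos _)]
    rw [show (1:ℝ) = Real.exp 0 by simp]
    apply Real.exp_le_exp.2
    have hS0 : 0 ≤ S ω := Finset.sum_nonneg fun k _ => (hT01 k ω).1
    nlinarith
  have hcher := measure_le_le_exp_mul_mgf (μ := μ) (X := S)
    ((1 - γ) * (1 - δ) * (N : ℝ)) (t := -γ) (by linarith) hintS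
  -- mgf of the sum factorizes
  have hSfun : S = ∑ i : Fin N, (fun k : Fin N => T k) i := by
    ext ω
    rw [Finset.sum_apply]
    exact (Fin.sum_univ_eq_sum_range (fun k => T k ω) N).symm
  have hmgfS : mgf S μ (-γ) = ∏ i : Fin N, mgf (T i) μ (-γ) := by
    rw [hSfun]; exact hindep.mgf_sum (fun i => hTmeas i) Finset.univ
  -- bound each factor
  have hmgfT : ∀ i : Fin N, mgf (T i) μ (-γ)
      ≤ Real.exp ((Real.exp (-γ) - 1) * (1 - δ)) := by
    intro i
    have hintTi : Integrable (T i) μ := by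
      refine (integrable_const (1 : ℝ)).mono' (hTmeas i).aestronglyMeasurable ?_
      filter_upwards with ω
      rw [Real.norm_eq_abs, abs_of_nonneg (hT01 i ω).1]; exact (hT01 i ω).2
    have hpt : (fun ω => Real.exp (-γ * T i ω))
        = fun ω => 1 + (Real.exp (-γ) - 1) * T i ω := by
      ext ω
      rcases hBer' i ω with h | h <;> simp [h]
    have hind : (T i : Ω → ℝ)
        = Set.indicator {ω | T i ω = 1} (fun _ => (1 : ℝ)) := by
      ext ω
      rcases hBer' i ω with h | h
      · rw [Set.indicator_apply]; simp [Set.mem_setOf_eq, h]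
      · rw [Set.indicator_apply]; simp [Set.mem_setOf_eq, h]
    have hmeas1 : MeasurableSet {ω | T i ω = 1} := hTmeas i (measurableSet_singleton 1)
    have hET : ∫ ω, T i ω ∂μ = (μ {ω | T i ω = 1}).toReal := by
      rw [show (fun ω => T i ω) = T i from rfl, hind,
        integral_indicator_const (1 : ℝ) hmeas1]
      simp; rfl
    have hmgf_eq : mgf (T i) μ (-γ) = 1 + (Real.exp (-γ) - 1) * (μ {ω | T i ω = 1}).toReal := by
      rw [mgf, hpt, integral_add (integrable_const 1) (hintTi.const_mul _)]
      rw [integral_const, integral_const_mul, hET]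
      simp
    rw [hmgf_eq]
    have hpi := hp i i.isLt
    have he1 : Real.exp (-γ) - 1 < 0 := by
      have : Real.exp (-γ) < 1 := Real.exp_lt_one_iff.2 (by linarith)
      linarith
    have h1 : 1 + (Real.exp (-γ) - 1) * (μ {ω | T i ω = 1}).toReal
        ≤ 1 + (Real.exp (-γ) - 1) * (1 - δ) := by
      nlinarith
    refine h1.trans ?_
    have := Real.add_one_le_exp ((Real.exp (-γ) - 1) * (1 - δ))
    linarith
  have hprod : ∏ i : Fin N, mgf (T i) μ (-γ)
      ≤ Real.exp ((N : ℝ) * ((Real.exp (-γ) - 1) * (1 - δ))) := by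
    calc ∏ i : Fin N, mgf (T i) μ (-γ)
        ≤ ∏ _i : Fin N, Real.exp ((Real.exp (-γ) - 1) * (1 - δ)) :=
          Finset.prod_le_prod (fun i _ => mgf_nonneg) (fun i _ => hmgfT i)
      _ = Real.exp ((Real.exp (-γ) - 1) * (1 - δ)) ^ N := by
          rw [Finset.prod_const, Finset.card_univ, Fintype.card_fin]
      _ = Real.exp ((N : ℝ) * ((Real.exp (-γ) - 1) * (1 - δ))) := by
          rw [← Real.exp_nat_mul]
  refine hcher.trans ?_
  have hmain : Real.exp (- -γ * ((1 - γ) * (1 - δ) * (N : ℝ))) * mgf S μ (-γ)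
      ≤ Real.exp (- -γ * ((1 - γ) * (1 - δ) * (N : ℝ))) *
        Real.exp ((N : ℝ) * ((Real.exp (-γ) - 1) * (1 - δ))) := by
    have := hmgfS ▸ hprod
    exact mul_le_mul_of_nonneg_left this (Real.exp_pos _).le
  refine hmain.trans ?_
  rw [← Real.exp_add, Real.exp_le_exp]
  have hkey := exp_neg_le_quad hγ0.le
  have hN0 : (0:ℝ) ≤ (N:ℝ) := Nat.cast_nonneg N
  have hbr : γ * ((1 - γ) * (1 - δ)) + (Real.exp (-γ) - 1) * (1 - δ)
      ≤ -((1 - δ) * γ ^ 2 / 2) := by nlinarith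
  nlinarith [mul_le_mul_of_nonneg_left hbr hN0]

set_option maxHeartbeats 1000000

/-- High-probability bound on the minimal gradient norm after `N` iterations of a
stochastic Newton-type method. -/
theorem stmt_12 {Ω : Type*} [MeasurableSpace Ω] (μ : Measure Ω) [IsProbabilityMeasure μ]
    {n : ℕ}
    (f : EuclideanSpace ℝ (Fin n) → ℝ)
    (g : EuclideanSpace ℝ (Fin n) → EuclideanSpace ℝ (Fin n))
    (ρ τ : ℝ) (hρ : 0 < ρ) (hτ : 0 < τ)
    (fbar : ℝ) (L : ℝ) (hL : 0 ≤ L)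
    (δ : ℝ) (hδ0 : 0 ≤ δ) (hδ1 : δ ≤ 1 / 2)
    (N : ℕ)
    (T : ℕ → Ω → ℝ) (hTmeas : ∀ k, Measurable (T k))
    (hBer : ∀ k ω, T k ω ∈ ({0, 1} : Set ℝ))
    (hindep : iIndepFun (fun k : Fin N => T k) μ)
    (hp : ∀ k < N, (μ {ω | T k ω = 1}).toReal ≥ 1 - δ)
    (X : ℕ → Ω → EuclideanSpace ℝ (Fin n)) (hXmeas : ∀ k, Measurable (X k))
    (hdec : ∀ᵐ ω ∂μ, ∀ k < N,
      f (X k ω) - f (X (k + 1) ω) ≥ T k ω * ρ * ‖X (k + 1) ω - X k ω‖ ^ 2)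
    (hstep : ∀ᵐ ω ∂μ, ∀ k < N,
      ‖X (k + 1) ω - X k ω‖ ≥ T k ω * τ * ‖g (X k ω)‖)
    (hfbar : ∀ y, f y ≥ fbar)
    (x0 : EuclideanSpace ℝ (Fin n)) (hX0 : ∀ ω, X 0 ω = x0)
    (hL' : ∀ᵐ ω ∂μ,
      (((Finset.range N).filter
          (fun k => T k ω = 1 ∧ X (k + 1) ω = X k ω)).card : ℝ) ≤ L)
    (γ : ℝ) (hγ : γ ∈ Set.Ioo (0 : ℝ) 1)
    (hpos : (1 - γ) * (1 - δ) * (N : ℝ) - L > 0) :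
    (μ {ω | (Finset.range (N + 1)).inf'
          (Finset.nonempty_range_iff.mpr (Nat.succ_ne_zero N))
          (fun k => ‖g (X k ω)‖)
        ≥ Real.sqrt ((f x0 - fbar) /
            (ρ * τ ^ 2 * ((1 - γ) * (1 - δ) * (N : ℝ) - L)))}).toReal
      ≤ Real.exp (-(N : ℝ) * (1 - δ) * γ ^ 2 / 2) := by
  have hBer' : ∀ k ω, T k ω = 0 ∨ T k ω = 1 := fun k ω => by simpa using hBer k ω
  have key := bern_chernoff μ N T hTmeas hBer hindep δ hδ1 hp γ hγ
  set Δ : ℝ := f x0 - fbar with hΔdef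
  set M : ℝ := (1 - γ) * (1 - δ) * (N : ℝ) - L with hMdef
  have hΔ0 : 0 ≤ Δ := by have := hfbar x0; simp [hΔdef]; linarith
  have hM0 : 0 < M := hpos
  have hden : 0 < ρ * τ ^ 2 * M := by positivity
  set c : ℝ := Real.sqrt (Δ / (ρ * τ ^ 2 * M)) with hcdef
  have hc0 : 0 ≤ c := Real.sqrt_nonneg _
  have hc2 : c ^ 2 = Δ / (ρ * τ ^ 2 * M) := Real.sq_sqrt (div_nonneg hΔ0 hden.le)
  -- the deterministic implication
  have hsub : ∀ ω : Ω,
      (∀ k < N, f (X k ω) - f (X (k + 1) ω) ≥ T k ω * ρ * ‖X (k + 1) ω - X k ω‖ ^ 2) →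
      (∀ k < N, ‖X (k + 1) ω - X k ω‖ ≥ T k ω * τ * ‖g (X k ω)‖) →
      ((((Finset.range N).filter
          (fun k => T k ω = 1 ∧ X (k + 1) ω = X k ω)).card : ℝ) ≤ L) →
      ((Finset.range (N + 1)).inf'
          (Finset.nonempty_range_iff.mpr (Nat.succ_ne_zero N))
          (fun k => ‖g (X k ω)‖) ≥ c) →
      ∑ k ∈ Finset.range N, T k ω ≤ (1 - γ) * (1 - δ) * (N : ℝ) := by
    intro ω hd hs hLω hE
    have hgk : ∀ k ≤ N, c ≤ ‖g (X k ω)‖ := fun k hk =>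
      le_trans hE (Finset.inf'_le _ (Finset.mem_range.2 (by omega)))
    have hT01 : ∀ k, 0 ≤ T k ω ∧ T k ω ≤ 1 := by
      intro k; rcases hBer' k ω with h | h <;> simp [h]
    have hterm0 : ∀ k ∈ Finset.range N, 0 ≤ f (X k ω) - f (X (k + 1) ω) := by
      intro k hk
      have h1 := hd k (Finset.mem_range.1 hk)
      have h2 : 0 ≤ T k ω * ρ * ‖X (k + 1) ω - X k ω‖ ^ 2 :=
        mul_nonneg (mul_nonneg (hT01 k).1 hρ.le) (sq_nonneg _)
      linarith
    have htel : ∑ k ∈ Finset.range N, (f (X k ω) - f (X (k + 1) ω))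
        = f (X 0 ω) - f (X N ω) := Finset.sum_range_sub' (fun k => f (X k ω)) N
    have hsumΔ : ∑ k ∈ Finset.range N, (f (X k ω) - f (X (k + 1) ω)) ≤ Δ := by
      rw [htel, hX0 ω]
      have := hfbar (X N ω)
      simp [hΔdef]; linarith
    set F : Finset ℕ := (Finset.range N).filter
        (fun k => T k ω = 1 ∧ X (k + 1) ω ≠ X k ω) with hFdef
    have hq : ρ * τ ^ 2 * c ^ 2 = Δ / M := by
      rw [hc2]; field_simp
    have hFterm : ∀ k ∈ F, Δ / M ≤ f (X k ω) - f (X (k + 1) ω) := by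
      intro k hk
      rw [hFdef, Finset.mem_filter, Finset.mem_range] at hk
      obtain ⟨hkN, hT1, _⟩ := hk
      have h1 : τ * c ≤ ‖X (k + 1) ω - X k ω‖ := by
        have hstep' := hs k hkN
        have hg := hgk k (le_of_lt hkN)
        rw [hT1] at hstep'
        have : τ * c ≤ τ * ‖g (X k ω)‖ := mul_le_mul_of_nonneg_left hg hτ.le
        linarith
      have h2 : (0:ℝ) ≤ τ * c := by positivity
      have h3 : (τ * c) ^ 2 ≤ ‖X (k + 1) ω - X k ω‖ ^ 2 := pow_le_pow_left₀ h2 h1 2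
      have h4 := hd k hkN
      rw [hT1] at h4
      have h5 : ρ * (τ * c) ^ 2 ≤ ρ * ‖X (k + 1) ω - X k ω‖ ^ 2 :=
        mul_le_mul_of_nonneg_left h3 hρ.le
      have h6 : ρ * (τ * c) ^ 2 = Δ / M := by rw [← hq]; ring
      linarith
    have hcardF : (F.card : ℝ) * (Δ / M) ≤ Δ := by
      have h1 : (F.card : ℝ) * (Δ / M) = ∑ _k ∈ F, (Δ / M) := by
        rw [Finset.sum_const, nsmul_eq_mul]
      rw [h1]
      calc ∑ _k ∈ F, (Δ / M) ≤ ∑ k ∈ F, (f (X k ω) - f (X (k + 1) ω)) :=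
            Finset.sum_le_sum hFterm
        _ ≤ ∑ k ∈ Finset.range N, (f (X k ω) - f (X (k + 1) ω)) :=
            Finset.sum_le_sum_of_subset_of_nonneg (Finset.filter_subset _ _)
              (fun k hk _ => hterm0 k hk)
        _ ≤ Δ := hsumΔ
    have hFM : (F.card : ℝ) ≤ M := by
      rcases lt_or_eq_of_le hΔ0 with hΔpos | hΔz
      · have hdm : 0 < Δ / M := div_pos hΔpos hM0
        have h2 : (F.card : ℝ) * (Δ / M) ≤ M * (Δ / M) := by
          have hMM : M * (Δ / M) = Δ := by field_simp
          rw [hMM]; exact hcardF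
        exact le_of_mul_le_mul_right h2 hdm
      · -- Δ = 0 : F must be empty
        have hFempty : F = ∅ := by
          by_contra hne
          obtain ⟨k, hk⟩ := Finset.nonempty_of_ne_empty hne
          have hkmem := hk
          rw [hFdef, Finset.mem_filter, Finset.mem_range] at hkmem
          obtain ⟨hkN, hT1, hne'⟩ := hkmem
          have hpos' : 0 < f (X k ω) - f (X (k + 1) ω) := by
            have h4 := hd k hkN
            rw [hT1] at h4
            have hz : X (k + 1) ω - X k ω ≠ 0 := sub_ne_zero.2 hne'
            have hn : 0 < ‖X (k + 1) ω - X k ω‖ := norm_pos_iff.2 hz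
            have : 0 < ρ * ‖X (k + 1) ω - X k ω‖ ^ 2 := by positivity
            have hone : 1 * ρ * ‖X (k + 1) ω - X k ω‖ ^ 2
                = ρ * ‖X (k + 1) ω - X k ω‖ ^ 2 := by ring
            rw [hone] at h4
            linarith
          have hle : f (X k ω) - f (X (k + 1) ω)
              ≤ ∑ j ∈ Finset.range N, (f (X j ω) - f (X (j + 1) ω)) :=
            Finset.single_le_sum hterm0 (Finset.mem_range.2 hkN)
          have : (0:ℝ) < Δ := by linarith
          linarith [hΔz]
        simp [hFempty]; linarith
    have hsplit : (((Finset.range N).filter (fun k => T k ω = 1)).card : ℝ)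
        = (((Finset.range N).filter
            (fun k => T k ω = 1 ∧ X (k + 1) ω = X k ω)).card : ℝ) + (F.card : ℝ) := by
      have h := Finset.card_filter_add_card_filter_not
        (s := (Finset.range N).filter (fun k => T k ω = 1))
        (p := fun k => X (k + 1) ω = X k ω)
      rw [Finset.filter_filter, Finset.filter_filter] at h
      rw [hFdef]
      push_cast
      norm_cast
      omega
    have hsumT : ∑ k ∈ Finset.range N, T k ω
        = (((Finset.range N).filter (fun k => T k ω = 1)).card : ℝ) := by
      rw [← Finset.sum_boole]
      exact Finset.sum_congr rfl (fun k _ => by rcases hBer' k ω with h | h <;> simp [h])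
    rw [hsumT, hsplit]
    have : ((1:ℝ) - γ) * (1 - δ) * (N : ℝ) = M + L := by rw [hMdef]; ring
    rw [this]
    linarith
  -- combine with the almost-sure hypotheses
  set B : Set Ω := {ω | ∑ k ∈ Finset.range N, T k ω ≤ (1 - γ) * (1 - δ) * (N : ℝ)} with hBdef
  set P : Ω → Prop := fun ω => (∀ k < N,
      f (X k ω) - f (X (k + 1) ω) ≥ T k ω * ρ * ‖X (k + 1) ω - X k ω‖ ^ 2) ∧
      ((∀ k < N, ‖X (k + 1) ω - X k ω‖ ≥ T k ω * τ * ‖g (X k ω)‖) ∧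
      ((((Finset.range N).filter
          (fun k => T k ω = 1 ∧ X (k + 1) ω = X k ω)).card : ℝ) ≤ L)) with hPdef
  have hae : ∀ᵐ ω ∂μ, P ω := hdec.and (hstep.and hL')
  have hnull : μ {ω | ¬ P ω} = 0 := MeasureTheory.ae_iff.mp hae
  have hmono : μ {ω | (Finset.range (N + 1)).inf'
          (Finset.nonempty_range_iff.mpr (Nat.succ_ne_zero N))
          (fun k => ‖g (X k ω)‖)
        ≥ Real.sqrt (Δ / (ρ * τ ^ 2 * M))} ≤ μ B := by
    calc μ _ ≤ μ (B ∪ {ω | ¬ P ω}) := by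
          apply measure_mono
          intro ω hω
          by_cases hP : P ω
          · left
            rw [hPdef] at hP
            exact hsub ω hP.1 hP.2.1 hP.2.2 hω
          · right; exact hP
      _ ≤ μ B + μ {ω | ¬ P ω} := measure_union_le _ _
      _ = μ B := by rw [hnull, add_zero]
  calc (μ _).toReal ≤ (μ B).toReal := ENNReal.toReal_mono (measure_ne_top μ B) hmono
    _ ≤ Real.exp (-(N : ℝ) * (1 - δ) * γ ^ 2 / 2) := key
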